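/- Let a, b ≥ 1 be integers, N = 2^a·3^b, and 0 ≤ k < N. The image of the atom A_k under multiplication by N on G/Γ, computed in F, is a coset rectangle: {rep(N·y) : y ∈ A_k} = [0,1) × {2^a z − k : z ∈ ℤ₂} × {3^b w − k : w ∈ ℤ₃}. -/

import Mathlib

open Set

noncomputable section

/-- The ambient group `G = ℝ × ℚ₂ × ℚ₃`. -/
abbrev G : Type := ℝ × ℚ_[2] × ℚ_[3]

/-- The diagonal embedding of `ℚ` into `G`. -/
def Δ (r : ℚ) : G := ((r : ℝ), (r : ℚ_[2]), (r : ℚ_[3]))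

/-- `ℤ[1/6]`, the rationals expressible with denominator `6^k`. -/
def zInv6 : Set ℚ := {q | ∃ (z : ℤ) (k : ℕ), q = z / 6 ^ k}

/-- `Γ = Δ(ℤ[1/6])`. -/
def Γ : Set G := Δ '' zInv6

/-- The fundamental domain `F = [0,1) × ℤ₂ × ℤ₃`. -/
def F : Set G := {x | x.1 ∈ Set.Ico (0 : ℝ) 1 ∧ ‖x.2.1‖ ≤ 1 ∧ ‖x.2.2‖ ≤ 1}

/-- Coordinatewise multiplication by a rational on `G`. -/
def act (q : ℚ) (x : G) : G :=
  ((q : ℝ) * x.1, (q : ℚ_[2]) * x.2.1, (q : ℚ_[3]) * x.2.2)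

/-- The atom `A_k = [k/N, (k+1)/N) × ℤ₂ × ℤ₃` of the partition `ξ`. -/
def A (N k : ℕ) : Set G :=
  {x | x.1 ∈ Set.Ico ((k : ℝ) / N) (((k : ℝ) + 1) / N) ∧ ‖x.2.1‖ ≤ 1 ∧ ‖x.2.2‖ ≤ 1}




lemma norm3_2 : ‖(3 : ℚ_[2])‖ = 1 := by
  have h1 : ‖((3:ℤ) : ℚ_[2])‖ ≤ 1 := Padic.norm_int_le_one 3
  have h2 : ¬ ‖((3:ℤ) : ℚ_[2])‖ < 1 := by
    rw [Padic.norm_intCast_lt_one_iff]; decide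
  have : ‖((3:ℤ) : ℚ_[2])‖ = 1 := le_antisymm h1 (not_lt.mp h2)
  simpa using this

lemma norm2_3 : ‖(2 : ℚ_[3])‖ = 1 := by
  have h1 : ‖((2:ℤ) : ℚ_[3])‖ ≤ 1 := Padic.norm_int_le_one 2
  have h2 : ¬ ‖((2:ℤ) : ℚ_[3])‖ < 1 := by
    rw [Padic.norm_intCast_lt_one_iff]; decide
  have : ‖((2:ℤ) : ℚ_[3])‖ = 1 := le_antisymm h1 (not_lt.mp h2)
  simpa using this

lemma usub {p : ℕ} [Fact p.Prime] {x y : ℚ_[p]} (hx : ‖x‖ ≤ 1) (hy : ‖y‖ ≤ 1) :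
    ‖x - y‖ ≤ 1 := by
  have h := Padic.nonarchimedean x (-y)
  simp only [norm_neg] at h
  calc ‖x - y‖ = ‖x + -y‖ := by rw [sub_eq_add_neg]
  _ ≤ max ‖x‖ ‖y‖ := h
  _ ≤ 1 := max_le hx hy

lemma zInv6_int {q : ℚ} (hq : ∃ (z : ℤ) (k : ℕ), q = z / 6 ^ k)
    (h2 : ‖((q:ℚ) : ℚ_[2])‖ ≤ 1) (h3 : ‖((q:ℚ) : ℚ_[3])‖ ≤ 1) : ∃ n : ℤ, q = n := by
  obtain ⟨z, m, rfl⟩ := hq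
  have key2 : (z : ℚ_[2]) = (((z:ℚ) / 6 ^ m : ℚ) : ℚ_[2]) * 6 ^ m := by
    push_cast; field_simp
  have key3 : (z : ℚ_[3]) = (((z:ℚ) / 6 ^ m : ℚ) : ℚ_[3]) * 6 ^ m := by
    push_cast; field_simp
  have n6_2 : ‖(6 : ℚ_[2])‖ = 2⁻¹ := by
    have : (6 : ℚ_[2]) = 2 * 3 := by norm_num
    have hp : ‖(2 : ℚ_[2])‖ = 2⁻¹ := by simpa using Padic.norm_p (p := 2)
    rw [this, norm_mul, norm3_2, hp]
    norm_num
  have n6_3 : ‖(6 : ℚ_[3])‖ = 3⁻¹ := by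
    have : (6 : ℚ_[3]) = 2 * 3 := by norm_num
    have hp : ‖(3 : ℚ_[3])‖ = 3⁻¹ := by simpa using Padic.norm_p (p := 3)
    rw [this, norm_mul, norm2_3, hp]
    norm_num
  have hz2 : ((2:ℤ)^m) ∣ z := by
    have := (Padic.norm_int_le_pow_iff_dvd (p := 2) z m).1 ?_
    · exact_mod_cast this
    · rw [key2, norm_mul, norm_pow, n6_2]
      calc ‖(((z:ℚ) / 6 ^ m : ℚ) : ℚ_[2])‖ * (2:ℝ)⁻¹ ^ m ≤ 1 * (2:ℝ)⁻¹ ^ m := by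
            apply mul_le_mul_of_nonneg_right h2; positivity
      _ = (2:ℝ) ^ (-(m:ℤ)) := by rw [one_mul, zpow_neg, zpow_natCast, inv_pow]
  have hz3 : ((3:ℤ)^m) ∣ z := by
    have := (Padic.norm_int_le_pow_iff_dvd (p := 3) z m).1 ?_
    · exact_mod_cast this
    · rw [key3, norm_mul, norm_pow, n6_3]
      calc ‖(((z:ℚ) / 6 ^ m : ℚ) : ℚ_[3])‖ * (3:ℝ)⁻¹ ^ m ≤ 1 * (3:ℝ)⁻¹ ^ m := by
            apply mul_le_mul_of_nonneg_right h3; positivity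
      _ = (3:ℝ) ^ (-(m:ℤ)) := by rw [one_mul, zpow_neg, zpow_natCast, inv_pow]
  have hco : IsCoprime ((2:ℤ)^m) ((3:ℤ)^m) := by
    apply IsCoprime.pow
    rw [Int.isCoprime_iff_gcd_eq_one]; decide
  have h6 : ((6:ℤ)^m) ∣ z := by
    have := hco.mul_dvd hz2 hz3
    have e : (2:ℤ)^m * 3^m = 6^m := by rw [← mul_pow]; norm_num
    rwa [e] at this
  obtain ⟨t, rfl⟩ := h6
  refine ⟨t, ?_⟩
  push_cast
  field_simp

lemma zInv6_sub {q r : ℚ} (hq : q ∈ zInv6) (hr : r ∈ zInv6) : q - r ∈ zInv6 := by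
  obtain ⟨z, m, rfl⟩ := hq
  obtain ⟨w, n, rfl⟩ := hr
  refine ⟨z * 6 ^ n - w * 6 ^ m, m + n, ?_⟩
  push_cast
  field_simp
  ring

lemma zInv6_intCast (n : ℤ) : (n : ℚ) ∈ zInv6 := ⟨n, 0, by simp⟩

lemma Δ_sub (q r : ℚ) : Δ (q - r) = Δ q - Δ r := by
  simp [Δ, Prod.ext_iff]

lemma rep_unique {u v : G} (hu : u ∈ F) (hv : v ∈ F)
    {q : ℚ} (hq : q ∈ zInv6) (h : u - v = Δ q) : u = v := by
  have h1 : u.1 - v.1 = (q : ℝ) := by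
    have := congrArg Prod.fst h; simpa [Δ] using this
  have h2 : u.2.1 - v.2.1 = (q : ℚ_[2]) := by
    have := congrArg (fun x : G => x.2.1) h; simpa [Δ] using this
  have h3 : u.2.2 - v.2.2 = (q : ℚ_[3]) := by
    have := congrArg (fun x : G => x.2.2) h; simpa [Δ] using this
  obtain ⟨hu1, hu2, hu3⟩ := hu
  obtain ⟨hv1, hv2, hv3⟩ := hv
  obtain ⟨n, hn⟩ := zInv6_int hq (h2 ▸ usub hu2 hv2) (h3 ▸ usub hu3 hv3)
  have hq0 : q = 0 := by
    have habs : |(q : ℝ)| < 1 := by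
      rw [← h1, abs_lt]
      constructor <;> [linarith [hu1.1, hv1.2]; linarith [hu1.2, hv1.1]]
    rw [hn] at habs ⊢
    have : |(n : ℝ)| < 1 := by exact_mod_cast habs
    have : n = 0 := by
      by_contra hne
      have : (1 : ℝ) ≤ |(n : ℝ)| := by
        have : (1 : ℤ) ≤ |n| := Int.one_le_abs hne
        calc (1:ℝ) = ((1:ℤ):ℝ) := by norm_num
        _ ≤ ((|n|:ℤ):ℝ) := by exact_mod_cast this
        _ = |(n:ℝ)| := by push_cast; ring
      linarith
    simp [this]
  rw [hq0] at h
  have : u - v = 0 := by simpa [Δ, Prod.ext_iff] using h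
  exact sub_eq_zero.mp this

lemma rep_eq (rep : G → G) (hrep : ∀ x : G, rep x ∈ F ∧ x - rep x ∈ Γ)
    (x u : G) (hu : u ∈ F) (c : ℚ) (hc : c ∈ zInv6) (h : x - u = Δ c) : rep x = u := by
  obtain ⟨hF, hΓ⟩ := hrep x
  obtain ⟨r, hr6, hrx⟩ := hΓ
  refine rep_unique hF hu (zInv6_sub hc hr6) ?_
  rw [Δ_sub, ← h, hrx]
  abel

set_option maxHeartbeats 1000000

/-- The image of the atom `A_k` under multiplication by `N = 2^a 3^b` on `G/Γ`,
computed in `F` via the representative map `rep`, is the coset rectangle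
`[0,1) × (2^a ℤ₂ - k) × (3^b ℤ₃ - k)`. -/
theorem image_atom (rep : G → G) (hrep : ∀ x : G, rep x ∈ F ∧ x - rep x ∈ Γ)
    (a b : ℕ) (ha : 1 ≤ a) (hb : 1 ≤ b) (N : ℕ) (hN : N = 2 ^ a * 3 ^ b)
    (k : ℕ) (hk : k < N) :
    (fun y => rep (act (N : ℚ) y)) '' A N k =
      {u : G | u.1 ∈ Set.Ico (0 : ℝ) 1 ∧
        (∃ z : ℚ_[2], ‖z‖ ≤ 1 ∧ u.2.1 = 2 ^ a * z - (k : ℚ_[2])) ∧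
        (∃ w : ℚ_[3], ‖w‖ ≤ 1 ∧ u.2.2 = 3 ^ b * w - (k : ℚ_[3]))} := by
  have hN0 : 0 < (N : ℝ) := by rw [hN]; positivity
  have hNQ2 : (N : ℚ_[2]) = 2 ^ a * 3 ^ b := by rw [hN]; push_cast; ring
  have hNQ3 : (N : ℚ_[3]) = 2 ^ a * 3 ^ b := by rw [hN]; push_cast; ring
  have hk2 : ‖(k : ℚ_[2])‖ ≤ 1 := by
    have := Padic.norm_int_le_one (p := 2) (k : ℤ); simpa using this
  have hk3 : ‖(k : ℚ_[3])‖ ≤ 1 := by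
    have := Padic.norm_int_le_one (p := 3) (k : ℤ); simpa using this
  have h2le : ‖(2 : ℚ_[2])‖ ≤ 1 := by
    have := Padic.norm_int_le_one (p := 2) 2; simpa using this
  have h3le : ‖(3 : ℚ_[3])‖ ≤ 1 := by
    have := Padic.norm_int_le_one (p := 3) 3; simpa using this
  have hkz : ((k : ℕ) : ℚ) ∈ zInv6 := by
    have := zInv6_intCast (k : ℤ); simpa using this
  have h3ne2 : (3 : ℚ_[2]) ≠ 0 := by
    intro h; have := norm3_2; rw [h] at this; simp at this
  have h2ne3 : (2 : ℚ_[3]) ≠ 0 := by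
    intro h; have := norm2_3; rw [h] at this; simp at this
  ext u
  simp only [Set.mem_image, Set.mem_setOf_eq]
  constructor
  · rintro ⟨y, ⟨⟨hy1l, hy1r⟩, hy2, hy3⟩, rfl⟩
    have hNy2 : ‖(N : ℚ_[2]) * y.2.1‖ ≤ 1 := by
      rw [norm_mul]
      have hNn : ‖(N : ℚ_[2])‖ ≤ 1 := by
        have := Padic.norm_int_le_one (p := 2) (N : ℤ); simpa using this
      exact mul_le_one₀ hNn (norm_nonneg _) hy2
    have hNy3 : ‖(N : ℚ_[3]) * y.2.2‖ ≤ 1 := by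
      rw [norm_mul]
      have hNn : ‖(N : ℚ_[3])‖ ≤ 1 := by
        have := Padic.norm_int_le_one (p := 3) (N : ℤ); simpa using this
      exact mul_le_one₀ hNn (norm_nonneg _) hy3
    set u' : G := ((N : ℝ) * y.1 - k, (N : ℚ_[2]) * y.2.1 - k, (N : ℚ_[3]) * y.2.2 - k)
      with hu'
    have hr1 : (0 : ℝ) ≤ (N : ℝ) * y.1 - k := by
      have := (div_le_iff₀ hN0).mp hy1l
      nlinarith
    have hr2 : (N : ℝ) * y.1 - k < 1 := by
      have := (lt_div_iff₀ hN0).mp hy1r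
      nlinarith
    have huF : u' ∈ F := ⟨⟨hr1, hr2⟩, usub hNy2 hk2, usub hNy3 hk3⟩
    have hdiff : act (N : ℚ) y - u' = Δ ((k : ℕ) : ℚ) := by
      simp only [act, Δ, hu', Prod.mk_sub_mk]
      refine Prod.ext ?_ (Prod.ext ?_ ?_) <;> push_cast <;> ring
    have hrepx : rep (act (N : ℚ) y) = u' := rep_eq rep hrep _ _ huF _ hkz hdiff
    rw [hrepx]
    refine ⟨⟨hr1, hr2⟩, ⟨3 ^ b * y.2.1, ?_, ?_⟩, ⟨2 ^ a * y.2.2, ?_, ?_⟩⟩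
    · rw [norm_mul, norm_pow, norm3_2]; simpa using hy2
    · show (N : ℚ_[2]) * y.2.1 - k = 2 ^ a * (3 ^ b * y.2.1) - k
      rw [hNQ2]; ring
    · rw [norm_mul, norm_pow, norm2_3]; simpa using hy3
    · show (N : ℚ_[3]) * y.2.2 - k = 3 ^ b * (2 ^ a * y.2.2) - k
      rw [hNQ3]; ring
  · rintro ⟨hu1, ⟨z, hz, hz2⟩, ⟨w, hw, hw2⟩⟩
    have huF : u ∈ F := by
      refine ⟨hu1, ?_, ?_⟩
      · rw [hz2]
        refine usub ?_ hk2
        rw [norm_mul, norm_pow]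
        exact mul_le_one₀ (pow_le_one₀ (norm_nonneg _) h2le) (norm_nonneg _) hz
      · rw [hw2]
        refine usub ?_ hk3
        rw [norm_mul, norm_pow]
        exact mul_le_one₀ (pow_le_one₀ (norm_nonneg _) h3le) (norm_nonneg _) hw
    refine ⟨((u.1 + k) / N, z / 3 ^ b, w / 2 ^ a), ⟨⟨?_, ?_⟩, ?_, ?_⟩, ?_⟩
    · rw [div_le_div_iff_of_pos_right hN0]
      linarith [hu1.1]
    · rw [div_lt_div_iff_of_pos_right hN0]
      linarith [hu1.2]
    · rw [norm_div, norm_pow, norm3_2]; simpa using hz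
    · rw [norm_div, norm_pow, norm2_3]; simpa using hw
    · apply rep_eq rep hrep _ _ huF _ hkz
      simp only [act, Δ, Prod.mk_sub_mk]
      refine Prod.ext ?_ (Prod.ext ?_ ?_)
      · push_cast
        field_simp
        simp
      · show (N : ℚ_[2]) * (z / 3 ^ b) - u.2.1 = ((k : ℚ) : ℚ_[2])
        rw [hNQ2, hz2]
        push_cast
        field_simp
        ring
      · show (N : ℚ_[3]) * (w / 2 ^ a) - u.2.2 = ((k : ℚ) : ℚ_[3])
        rw [hNQ3, hw2]
        push_cast
        field_simp
        ring
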